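/- Let d ≥ 1 and let R₀ and R be positive definite real symmetric d×d matrices with det R₀ = det R = 1. Then the Kullback–Leibler divergence between the associated angular central Gaussian distributions is KL(μ_{R₀} ‖ μ_R) = (d/2) · ∫_{S^{d−1}} log( (xᵀ R⁻¹ x) / (xᵀ R₀⁻¹ x) ) dμ_{R₀}(x). -/

import Mathlib

open MeasureTheory Matrix

/-- The centered Gaussian measure `N(0,S)` on `ℝ^d` (as `EuclideanSpace ℝ (Fin d)`). -/
noncomputable def gaussianE (d : ℕ) (S : Matrix (Fin d) (Fin d) ℝ) :
    Measure (EuclideanSpace ℝ (Fin d)) :=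
  volume.withDensity fun x =>
    ENNReal.ofReal ((Real.sqrt ((2 * Real.pi) ^ d * S.det))⁻¹ *
      Real.exp (-(1 / 2) * ((fun i => x i) ⬝ᵥ S⁻¹.mulVec fun i => x i)))

/-- The normalization map `x ↦ x / ‖x‖`. -/
noncomputable def normalizeSphere (d : ℕ) (x : EuclideanSpace ℝ (Fin d)) :
    EuclideanSpace ℝ (Fin d) := ‖x‖⁻¹ • x

/-- The angular central Gaussian distribution with scatter matrix `R`: the pushforward of
`N(0,R)` under `x ↦ x / ‖x‖`, viewed as a measure on the ambient space supported on the
unit sphere. -/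
noncomputable def acg (d : ℕ) (R : Matrix (Fin d) (Fin d) ℝ) :
    Measure (EuclideanSpace ℝ (Fin d)) :=
  (gaussianE d R).map (normalizeSphere d)

/-- The Kullback–Leibler divergence `KL(μ‖ν) = ∫ log (dμ/dν) dμ`. -/
noncomputable def klDiv {α : Type*} [MeasurableSpace α] (μ ν : Measure α) : ℝ :=
  ∫ x, Real.log (μ.rnDeriv ν x).toReal ∂μ

/-! ### Auxiliary material -/

open scoped RealInnerProductSpace

section Aux

variable {d : ℕ}

/-- The quadratic form `x ↦ xᵀ M x`. -/
noncomputable def qf (d : ℕ) (M : Matrix (Fin d) (Fin d) ℝ) (x : EuclideanSpace ℝ (Fin d)) : ℝ :=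
  (fun i => x i) ⬝ᵥ M.mulVec fun i => x i

lemma qf_eq_sum (M : Matrix (Fin d) (Fin d) ℝ) (x : EuclideanSpace ℝ (Fin d)) :
    qf d M x = ∑ i, ∑ j, x i * (M i j * x j) := by
  simp [qf, dotProduct, mulVec, Finset.mul_sum]

lemma qf_pos {M : Matrix (Fin d) (Fin d) ℝ} (hM : M.PosDef) {x : EuclideanSpace ℝ (Fin d)}
    (hx : x ≠ 0) : 0 < qf d M x := by
  have hx' : (fun i => x i) ≠ (0 : Fin d → ℝ) := by
    intro h
    apply hx
    ext i
    exact congrFun h i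
  simpa [qf] using hM.dotProduct_mulVec_pos hx'

lemma qf_smul (M : Matrix (Fin d) (Fin d) ℝ) (t : ℝ) (x : EuclideanSpace ℝ (Fin d)) :
    qf d M (t • x) = t ^ 2 * qf d M x := by
  have h : ∀ i, (t • x) i = t * x i := fun i => rfl
  simp only [qf_eq_sum, h, Finset.mul_sum]
  congr 1; ext i; congr 1; ext j; ring

lemma qf_zero (M : Matrix (Fin d) (Fin d) ℝ) : qf d M (0 : EuclideanSpace ℝ (Fin d)) = 0 := by
  have := qf_smul M 0 (0 : EuclideanSpace ℝ (Fin d))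
  simpa using this

lemma qf_differentiable (M : Matrix (Fin d) (Fin d) ℝ) : Differentiable ℝ (qf d M) := by
  have : qf d M = fun x => ∑ i, ∑ j, x i * (M i j * x j) := by
    ext x; exact qf_eq_sum M x
  rw [this]
  apply Differentiable.fun_sum
  intro i _
  apply Differentiable.fun_sum
  intro j _
  have hi : Differentiable ℝ (fun x : EuclideanSpace ℝ (Fin d) => x i) :=
    (EuclideanSpace.proj i : EuclideanSpace ℝ (Fin d) →L[ℝ] ℝ).differentiable
  have hj : Differentiable ℝ (fun x : EuclideanSpace ℝ (Fin d) => x j) :=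
    (EuclideanSpace.proj j : EuclideanSpace ℝ (Fin d) →L[ℝ] ℝ).differentiable
  exact hi.mul (hj.const_mul _)

lemma qf_continuous (M : Matrix (Fin d) (Fin d) ℝ) : Continuous (qf d M) :=
  (qf_differentiable M).continuous

/-- Determinant of `a • id + (x ↦ l x • v)` when `l v = 0`. -/
lemma det_smul_id_add_smulRight (a : ℝ) (ha : a ≠ 0) (l : EuclideanSpace ℝ (Fin d) →L[ℝ] ℝ)
    (v : EuclideanSpace ℝ (Fin d)) (hl : l v = 0) :
    LinearMap.det ((a • ContinuousLinearMap.id ℝ (EuclideanSpace ℝ (Fin d))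
      + l.smulRight v : EuclideanSpace ℝ (Fin d) →L[ℝ] EuclideanSpace ℝ (Fin d))
        : EuclideanSpace ℝ (Fin d) →ₗ[ℝ] EuclideanSpace ℝ (Fin d)) = a ^ d := by
  classical
  set B : Module.Basis (Fin d) ℝ (EuclideanSpace ℝ (Fin d)) := PiLp.basisFun 2 ℝ (Fin d) with hB
  set L : EuclideanSpace ℝ (Fin d) →ₗ[ℝ] EuclideanSpace ℝ (Fin d) :=
    ((a • ContinuousLinearMap.id ℝ (EuclideanSpace ℝ (Fin d)) + l.smulRight v
      : EuclideanSpace ℝ (Fin d) →L[ℝ] EuclideanSpace ℝ (Fin d))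
        : EuclideanSpace ℝ (Fin d) →ₗ[ℝ] EuclideanSpace ℝ (Fin d)) with hL
  set w : Fin d → ℝ := fun j => l (B j) with hw
  have hms : LinearMap.toMatrix B B L =
      a • (1 + Matrix.replicateCol Unit (a⁻¹ • fun i => v i) * Matrix.replicateRow Unit w) := by
    ext i j
    have hBapp : L (B j) = a • (B j) + (l (B j)) • v := by
      simp [hL]
    rw [LinearMap.toMatrix_apply, hBapp, hB]
    rw [PiLp.basisFun_repr]
    have h1 : (a • (B j) + (l (B j)) • v) i = a * (B j) i + l (B j) * v i := rfl
    rw [h1]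
    have hBji : (B j) i = (1 : Matrix (Fin d) (Fin d) ℝ) i j := by
      simp [hB, PiLp.basisFun_apply, Matrix.one_apply, Pi.single_apply, eq_comm,
        PiLp.ofLp_single]
    rw [hBji]
    simp only [Matrix.smul_apply, Matrix.add_apply, Matrix.mul_apply, Finset.univ_unique,
      Finset.sum_singleton, Matrix.replicateCol_apply, Matrix.replicateRow_apply, Pi.smul_apply, smul_eq_mul]
    field_simp
    ring
  have hdet : LinearMap.det L = (LinearMap.toMatrix B B L).det := by
    rw [LinearMap.det_toMatrix]
  rw [show (LinearMap.det ((a • ContinuousLinearMap.id ℝ (EuclideanSpace ℝ (Fin d))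
      + l.smulRight v : EuclideanSpace ℝ (Fin d) →L[ℝ] EuclideanSpace ℝ (Fin d))
        : EuclideanSpace ℝ (Fin d) →ₗ[ℝ] EuclideanSpace ℝ (Fin d))) = LinearMap.det L from rfl,
    hdet, hms, Matrix.det_smul, Matrix.det_one_add_replicateCol_mul_replicateRow]
  have hv : v = ∑ j, v j • B j := by
    have h := B.sum_repr v
    conv_lhs => rw [← h]
    apply Finset.sum_congr rfl
    intro j _
    rw [hB, PiLp.basisFun_repr]
  have hlv : l v = ∑ j, v j * l (B j) := by
    conv_lhs => rw [hv]
    rw [map_sum]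
    apply Finset.sum_congr rfl
    intro j _
    rw [l.map_smul, smul_eq_mul]
  have hwv : w ⬝ᵥ (a⁻¹ • fun i => v i) = a⁻¹ * l v := by
    rw [hlv, dotProduct, Finset.mul_sum]
    congr 1; ext j
    simp [hw]
    ring
  rw [hwv, hl]
  simp

section phi

variable (M N : Matrix (Fin d) (Fin d) ℝ)

/-- The scaling factor `√(xᵀMx / xᵀNx)`. -/
noncomputable def cfun (M N : Matrix (Fin d) (Fin d) ℝ) (x : EuclideanSpace ℝ (Fin d)) : ℝ :=
  Real.sqrt (qf d M x / qf d N x)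

/-- The radial rescaling map `x ↦ c(x) • x`. -/
noncomputable def phi (M N : Matrix (Fin d) (Fin d) ℝ) (x : EuclideanSpace ℝ (Fin d)) :
    EuclideanSpace ℝ (Fin d) := cfun M N x • x

variable {M N}

lemma cfun_pos (hM : M.PosDef) (hN : N.PosDef) {x : EuclideanSpace ℝ (Fin d)} (hx : x ≠ 0) :
    0 < cfun M N x :=
  Real.sqrt_pos.2 (div_pos (qf_pos hM hx) (qf_pos hN hx))

lemma cfun_smul {t : ℝ} (ht : t ≠ 0) (x : EuclideanSpace ℝ (Fin d)) :
    cfun M N (t • x) = cfun M N x := by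
  unfold cfun
  rw [qf_smul, qf_smul, mul_div_mul_left _ _ (pow_ne_zero 2 ht)]

lemma cfun_sq (hM : M.PosDef) (hN : N.PosDef) {x : EuclideanSpace ℝ (Fin d)} (hx : x ≠ 0) :
    cfun M N x ^ 2 = qf d M x / qf d N x := by
  rw [cfun, Real.sq_sqrt (le_of_lt (div_pos (qf_pos hM hx) (qf_pos hN hx)))]

lemma qf_phi (hM : M.PosDef) (hN : N.PosDef) {x : EuclideanSpace ℝ (Fin d)} (hx : x ≠ 0) :
    qf d N (phi M N x) = qf d M x := by
  rw [phi, qf_smul, cfun_sq hM hN hx, div_mul_cancel₀]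
  exact ne_of_gt (qf_pos hN hx)

lemma cfun_differentiableAt (hM : M.PosDef) (hN : N.PosDef) {x : EuclideanSpace ℝ (Fin d)}
    (hx : x ≠ 0) : DifferentiableAt ℝ (cfun M N) x := by
  have h1 : DifferentiableAt ℝ (fun y => qf d M y / qf d N y) x := by
    have := (qf_differentiable M x).mul ((qf_differentiable N x).inv (ne_of_gt (qf_pos hN hx)))
    exact this
  exact DifferentiableAt.sqrt h1 (ne_of_gt (div_pos (qf_pos hM hx) (qf_pos hN hx)))

lemma cfun_euler (hM : M.PosDef) (hN : N.PosDef) {x : EuclideanSpace ℝ (Fin d)} (hx : x ≠ 0) :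
    fderiv ℝ (cfun M N) x x = 0 := by
  have hsm : HasDerivAt (fun t : ℝ => t • x) ((1:ℝ) • x) 1 := (hasDerivAt_id 1).smul_const x
  have hdc : DifferentiableAt ℝ (cfun M N) ((1:ℝ) • x) := by
    rw [one_smul]; exact cfun_differentiableAt hM hN hx
  have hcomp : HasDerivAt (fun t : ℝ => cfun M N (t • x))
      (fderiv ℝ (cfun M N) ((1:ℝ) • x) ((1:ℝ) • x)) 1 :=
    by have := (hdc.hasFDerivAt).comp_hasDerivAt 1 hsm; exact this
  have hconst : (fun t : ℝ => cfun M N (t • x)) =ᶠ[nhds 1] fun _ => cfun M N x := by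
    filter_upwards [eventually_gt_nhds (show (0:ℝ) < 1 by norm_num)] with t ht
    exact cfun_smul (ne_of_gt ht) x
  have hzero : HasDerivAt (fun t : ℝ => cfun M N (t • x)) 0 1 :=
    (hasDerivAt_const (1:ℝ) (cfun M N x)).congr_of_eventuallyEq hconst
  have := hcomp.unique hzero
  rwa [one_smul] at this

/-- The derivative of `phi`. -/
noncomputable def phiDeriv (M N : Matrix (Fin d) (Fin d) ℝ) (x : EuclideanSpace ℝ (Fin d)) :
    EuclideanSpace ℝ (Fin d) →L[ℝ] EuclideanSpace ℝ (Fin d) :=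
  cfun M N x • ContinuousLinearMap.id ℝ (EuclideanSpace ℝ (Fin d))
    + (fderiv ℝ (cfun M N) x).smulRight x

lemma phi_hasFDerivAt (hM : M.PosDef) (hN : N.PosDef) {x : EuclideanSpace ℝ (Fin d)}
    (hx : x ≠ 0) : HasFDerivAt (phi M N) (phiDeriv M N x) x := by
  have hc : HasFDerivAt (cfun M N) (fderiv ℝ (cfun M N) x) x :=
    (cfun_differentiableAt hM hN hx).hasFDerivAt
  have hid : HasFDerivAt (fun y : EuclideanSpace ℝ (Fin d) => y)
      (ContinuousLinearMap.id ℝ (EuclideanSpace ℝ (Fin d))) x := hasFDerivAt_id x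
  exact hc.smul hid

lemma phiDeriv_det (hM : M.PosDef) (hN : N.PosDef) {x : EuclideanSpace ℝ (Fin d)} (hx : x ≠ 0) :
    (phiDeriv M N x).det = cfun M N x ^ d :=
  det_smul_id_add_smulRight _ (ne_of_gt (cfun_pos hM hN hx)) _ _ (cfun_euler hM hN hx)

end phi

section norm

lemma normalizeSphere_smul {t : ℝ} (ht : 0 < t) (x : EuclideanSpace ℝ (Fin d)) :
    normalizeSphere d (t • x) = normalizeSphere d x := by
  rcases eq_or_ne x 0 with rfl | hx
  · simp [normalizeSphere]
  · unfold normalizeSphere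
    rw [norm_smul, Real.norm_eq_abs, abs_of_pos ht, smul_smul]
    congr 1
    rw [mul_inv]
    rw [mul_comm t⁻¹, mul_assoc, inv_mul_cancel₀ (ne_of_gt ht), mul_one]

lemma measurable_normalizeSphere : Measurable (normalizeSphere d) := by
  unfold normalizeSphere
  exact (measurable_norm.inv).smul measurable_id

lemma normalizeSphere_eq_zero_iff {x : EuclideanSpace ℝ (Fin d)} :
    normalizeSphere d x = 0 ↔ x = 0 := by
  constructor
  · intro h
    by_contra hx
    have : (‖x‖⁻¹ : ℝ) ≠ 0 := inv_ne_zero (norm_ne_zero_iff.2 hx)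
    exact hx (by simpa [normalizeSphere, smul_eq_zero, this] using h)
  · rintro rfl; simp [normalizeSphere]

variable {M N : Matrix (Fin d) (Fin d) ℝ}

lemma phi_normalizeSphere (hM : M.PosDef) (hN : N.PosDef) {x : EuclideanSpace ℝ (Fin d)}
    (hx : x ≠ 0) : normalizeSphere d (phi M N x) = normalizeSphere d x :=
  normalizeSphere_smul (cfun_pos hM hN hx) x

lemma phi_ne_zero (hM : M.PosDef) (hN : N.PosDef) {x : EuclideanSpace ℝ (Fin d)} (hx : x ≠ 0) :
    phi M N x ≠ 0 :=
  smul_ne_zero (ne_of_gt (cfun_pos hM hN hx)) hx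

lemma cfun_eq_of_normalize_eq {x y : EuclideanSpace ℝ (Fin d)} (hx : x ≠ 0) (hy : y ≠ 0)
    (h : normalizeSphere d x = normalizeSphere d y) : cfun M N x = cfun M N y := by
  have hyx : y = (‖y‖ * ‖x‖⁻¹) • x := by
    have h1 : (‖y‖ : ℝ) • normalizeSphere d y = (‖y‖ : ℝ) • normalizeSphere d x := by rw [h]
    simp only [normalizeSphere] at h1
    rw [smul_smul, mul_inv_cancel₀ (norm_ne_zero_iff.2 hy), one_smul, smul_smul] at h1
    exact h1
  have hne : (‖y‖ * ‖x‖⁻¹ : ℝ) ≠ 0 :=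
    mul_ne_zero (norm_ne_zero_iff.2 hy) (inv_ne_zero (norm_ne_zero_iff.2 hx))
  calc cfun M N x = cfun M N ((‖y‖ * ‖x‖⁻¹) • x) := (cfun_smul hne x).symm
    _ = cfun M N y := by rw [← hyx]

lemma phi_injOn (hM : M.PosDef) (hN : N.PosDef) :
    Set.InjOn (phi M N) {x : EuclideanSpace ℝ (Fin d) | x ≠ 0} := by
  intro x hx y hy hxy
  have hnx : normalizeSphere d x = normalizeSphere d y := by
    rw [← phi_normalizeSphere hM hN hx, ← phi_normalizeSphere hM hN hy, hxy]
  have hc : cfun M N x = cfun M N y := cfun_eq_of_normalize_eq hx hy hnx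
  have h2 : cfun M N x • x = cfun M N x • y := by
    have h3 := hxy
    unfold phi at h3
    rw [← hc] at h3
    exact h3
  exact smul_right_injective _ (ne_of_gt (cfun_pos hM hN hx)) h2

lemma phi_image (hM : M.PosDef) (hN : N.PosDef) (A : Set (EuclideanSpace ℝ (Fin d))) :
    phi M N '' ((normalizeSphere d) ⁻¹' A ∩ {x | x ≠ 0})
      = (normalizeSphere d) ⁻¹' A ∩ {x | x ≠ 0} := by
  apply Set.Subset.antisymm
  · rintro _ ⟨x, ⟨hxA, hx0⟩, rfl⟩
    exact ⟨by rwa [Set.mem_preimage, phi_normalizeSphere hM hN hx0],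
      phi_ne_zero hM hN hx0⟩
  · rintro y ⟨hyA, hy0⟩
    have hcy := cfun_pos hM hN hy0
    refine ⟨(cfun M N y)⁻¹ • y, ⟨?_, ?_⟩, ?_⟩
    · rwa [Set.mem_preimage, normalizeSphere_smul (inv_pos.2 hcy)]
    · exact smul_ne_zero (inv_ne_zero (ne_of_gt hcy)) hy0
    · rw [phi, cfun_smul (inv_ne_zero (ne_of_gt hcy)), smul_smul,
        mul_inv_cancel₀ (ne_of_gt hcy), one_smul]

end norm

section integr

lemma qf_lower_bound {M : Matrix (Fin d) (Fin d) ℝ} (hM : M.PosDef) (hd : 1 ≤ d) :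
    ∃ ε : ℝ, 0 < ε ∧ ∀ x : EuclideanSpace ℝ (Fin d), ε * ‖x‖ ^ 2 ≤ qf d M x := by
  have hne : (Metric.sphere (0 : EuclideanSpace ℝ (Fin d)) 1).Nonempty := by
    refine ⟨EuclideanSpace.single ⟨0, hd⟩ (1 : ℝ), ?_⟩
    simp [EuclideanSpace.norm_single]
  obtain ⟨x₀, hx₀mem, hx₀min'⟩ := (isCompact_sphere (0 : EuclideanSpace ℝ (Fin d)) 1)
    |>.exists_isMinOn hne (qf_continuous M).continuousOn
  have hx₀min : ∀ y ∈ Metric.sphere (0 : EuclideanSpace ℝ (Fin d)) 1,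
      qf d M x₀ ≤ qf d M y := fun y hy => hx₀min' hy
  have hx₀norm : ‖x₀‖ = 1 := by simpa using hx₀mem
  have hx₀ne : x₀ ≠ 0 := by
    intro h; rw [h] at hx₀norm; simp at hx₀norm
  refine ⟨qf d M x₀, qf_pos hM hx₀ne, fun x => ?_⟩
  rcases eq_or_ne x 0 with rfl | hx
  · simp [qf_zero]
  · have hxnorm : (0:ℝ) < ‖x‖ := norm_pos_iff.2 hx
    have hu : (‖x‖⁻¹ • x) ∈ Metric.sphere (0 : EuclideanSpace ℝ (Fin d)) 1 := by
      simp [norm_smul, abs_of_pos (inv_pos.2 hxnorm), inv_mul_cancel₀ (ne_of_gt hxnorm)]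
    have h1 := hx₀min _ hu
    have h2 : qf d M (‖x‖⁻¹ • x) = ‖x‖⁻¹ ^ 2 * qf d M x := qf_smul M _ x
    rw [h2] at h1
    have h3 : qf d M x₀ * ‖x‖ ^ 2 ≤ ‖x‖⁻¹ ^ 2 * qf d M x * ‖x‖ ^ 2 := by
      apply mul_le_mul_of_nonneg_right h1 (by positivity)
    calc qf d M x₀ * ‖x‖ ^ 2 ≤ ‖x‖⁻¹ ^ 2 * qf d M x * ‖x‖ ^ 2 := h3
      _ = qf d M x := by field_simp

lemma integrable_rexp_neg_mul_sq_norm {b : ℝ} (hb : 0 < b) :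
    Integrable (fun v : EuclideanSpace ℝ (Fin d) => Real.exp (-b * ‖v‖ ^ 2)) := by
  have h := (GaussianFourier.integrable_cexp_neg_mul_sq_norm_add (V := EuclideanSpace ℝ (Fin d))
    (b := (b : ℂ)) (by simpa using hb) 0 (0 : EuclideanSpace ℝ (Fin d))).norm
  refine h.congr (Filter.Eventually.of_forall fun v => ?_)
  show ‖Complex.exp _‖ = _
  rw [Complex.norm_exp]
  congr 1
  have : (-(b:ℂ) * (‖v‖:ℂ) ^ 2 + 0 * ((inner ℝ (0 : EuclideanSpace ℝ (Fin d)) v : ℝ) : ℂ))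
      = ((-b * ‖v‖ ^ 2 : ℝ) : ℂ) := by push_cast; ring
  rw [this, Complex.ofReal_re]

lemma integrable_gauss_density {M : Matrix (Fin d) (Fin d) ℝ} (hM : M.PosDef) (hd : 1 ≤ d)
    (C : ℝ) :
    Integrable (fun x : EuclideanSpace ℝ (Fin d) => C * Real.exp (-(1/2) * qf d M x)) := by
  obtain ⟨ε, hε, hbound⟩ := qf_lower_bound hM hd
  have hcont : Continuous (fun x : EuclideanSpace ℝ (Fin d) =>
      C * Real.exp (-(1/2) * qf d M x)) :=
    continuous_const.mul ((continuous_const.mul (qf_continuous M)).rexp)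
  refine Integrable.mono' ((integrable_rexp_neg_mul_sq_norm (d := d)
    (half_pos hε)).const_mul |C|) hcont.aestronglyMeasurable
    (Filter.Eventually.of_forall fun x => ?_)
  rw [Real.norm_eq_abs, abs_mul, abs_of_pos (Real.exp_pos _)]
  apply mul_le_mul_of_nonneg_left _ (abs_nonneg C)
  apply Real.exp_le_exp.2
  have := hbound x
  nlinarith

end integr

/-- `cfun ^ d` as an `rpow` of the quadratic-form ratio. -/
lemma cfun_pow_eq {M N : Matrix (Fin d) (Fin d) ℝ} (hM : M.PosDef) (hN : N.PosDef)
    {x : EuclideanSpace ℝ (Fin d)} (hx : x ≠ 0) :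
    cfun M N x ^ d = (qf d M x / qf d N x) ^ ((d : ℝ) / 2) := by
  have hr : (0:ℝ) ≤ qf d M x / qf d N x := le_of_lt (div_pos (qf_pos hM hx) (qf_pos hN hx))
  rw [cfun, Real.sqrt_eq_rpow]
  rw [show ((d : ℝ) / 2) = (1/2) * (d : ℕ) by push_cast; ring]
  rw [Real.rpow_mul hr, Real.rpow_natCast]

lemma ratio_normalize {M N : Matrix (Fin d) (Fin d) ℝ} {x : EuclideanSpace ℝ (Fin d)}
    (hx : x ≠ 0) :
    qf d M (normalizeSphere d x) / qf d N (normalizeSphere d x) = qf d M x / qf d N x := by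
  unfold normalizeSphere
  rw [qf_smul, qf_smul,
    mul_div_mul_left _ _ (pow_ne_zero 2 (inv_ne_zero (norm_ne_zero_iff.2 hx)))]

end Aux

theorem kl_acg_acg (d : ℕ) (hd : 1 ≤ d) (R₀ R : Matrix (Fin d) (Fin d) ℝ)
    (hR₀ : R₀.PosDef) (hR : R.PosDef) (hdet₀ : R₀.det = 1) (hdet : R.det = 1) :
    klDiv (acg d R₀) (acg d R) =
      (d / 2 : ℝ) * ∫ x, Real.log (((fun i => x i) ⬝ᵥ R⁻¹.mulVec fun i => x i) /
        ((fun i => x i) ⬝ᵥ R₀⁻¹.mulVec fun i => x i)) ∂ acg d R₀ := by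
  classical
  have hM : (R⁻¹).PosDef := hR.inv
  have hN : (R₀⁻¹).PosDef := hR₀.inv
  haveI : Nontrivial (EuclideanSpace ℝ (Fin d)) := by
    refine ⟨EuclideanSpace.single ⟨0, hd⟩ (1 : ℝ), 0, ?_⟩
    intro h
    have h2 := congrArg norm h
    rw [EuclideanSpace.norm_single] at h2
    simp at h2
  set C : ℝ := (Real.sqrt ((2 * Real.pi) ^ d))⁻¹ with hCdef
  have hgauss : ∀ S : Matrix (Fin d) (Fin d) ℝ, S.det = 1 → gaussianE d S =
      volume.withDensity (fun x => ENNReal.ofReal (C * Real.exp (-(1/2) * qf d S⁻¹ x))) := by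
    intro S hS
    simp only [gaussianE, hS, mul_one]
    rfl
  have hdens : ∀ S : Matrix (Fin d) (Fin d) ℝ, Measurable
      (fun x : EuclideanSpace ℝ (Fin d) =>
        ENNReal.ofReal (C * Real.exp (-(1/2) * qf d S⁻¹ x))) := fun S =>
    (continuous_const.mul ((continuous_const.mul (qf_continuous S⁻¹)).rexp))
      |>.measurable.ennreal_ofReal
  set H : EuclideanSpace ℝ (Fin d) → ENNReal :=
    fun u => ENNReal.ofReal ((qf d R⁻¹ u / qf d R₀⁻¹ u) ^ ((d : ℝ) / 2)) with hHdef
  have hratio_meas : Measurable (fun u : EuclideanSpace ℝ (Fin d) =>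
      qf d R⁻¹ u / qf d R₀⁻¹ u) :=
    ((qf_continuous (R⁻¹)).measurable).div ((qf_continuous (R₀⁻¹)).measurable)
  have hrpow_cont : Continuous (fun t : ℝ => t ^ ((d : ℝ) / 2)) := by
    rw [continuous_iff_continuousAt]
    intro t
    exact Real.continuousAt_rpow_const t _ (Or.inr (by positivity))
  have hHmeas : Measurable H :=
    (hrpow_cont.measurable.comp hratio_meas).ennreal_ofReal
  haveI : IsFiniteMeasure (gaussianE d R) := by
    constructor
    rw [hgauss R hdet, withDensity_apply _ MeasurableSet.univ, Measure.restrict_univ]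
    exact (integrable_gauss_density hM hd C).lintegral_lt_top
  haveI : IsFiniteMeasure (acg d R) := by
    constructor
    rw [acg, Measure.map_apply measurable_normalizeSphere MeasurableSet.univ]
    exact measure_lt_top _ _
  have h0set : {x : EuclideanSpace ℝ (Fin d) | x ≠ 0}
      = ({0} : Set (EuclideanSpace ℝ (Fin d)))ᶜ := by
    ext x; simp
  -- the key identity
  have key : acg d R₀ = (acg d R).withDensity H := by
    apply Measure.ext
    intro A hA
    have hpreA : MeasurableSet (normalizeSphere d ⁻¹' A) := measurable_normalizeSphere hA
    set s₀ : Set (EuclideanSpace ℝ (Fin d)) :=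
      normalizeSphere d ⁻¹' A ∩ {x | x ≠ 0} with hs₀def
    have hs₀ : MeasurableSet s₀ := by
      rw [hs₀def, h0set]
      exact hpreA.inter (measurableSet_singleton 0).compl
    have hsae : (normalizeSphere d ⁻¹' A : Set (EuclideanSpace ℝ (Fin d))) =ᵐ[volume] s₀ := by
      rw [MeasureTheory.ae_eq_set]
      constructor
      · refine measure_mono_null ?_ (measure_singleton (0 : EuclideanSpace ℝ (Fin d)))
        intro x hx
        rcases hx with ⟨hx1, hx2⟩
        by_contra hx0
        exact hx2 ⟨hx1, hx0⟩
      · rw [Set.diff_eq_empty.2 Set.inter_subset_left]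
        exact measure_empty
    have hinj : Set.InjOn (phi R⁻¹ R₀⁻¹) s₀ :=
      (phi_injOn hM hN).mono Set.inter_subset_right
    have hder : ∀ x ∈ s₀, HasFDerivWithinAt (phi R⁻¹ R₀⁻¹) (phiDeriv R⁻¹ R₀⁻¹ x) s₀ x :=
      fun x hx => (phi_hasFDerivAt hM hN hx.2).hasFDerivWithinAt
    have hpoint : ∀ x ∈ s₀,
        ENNReal.ofReal |(phiDeriv R⁻¹ R₀⁻¹ x).det|
          * ENNReal.ofReal (C * Real.exp (-(1/2) * qf d (R₀⁻¹) (phi R⁻¹ R₀⁻¹ x)))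
        = ((fun x => ENNReal.ofReal (C * Real.exp (-(1/2) * qf d R⁻¹ x)))
            * fun x => H (normalizeSphere d x)) x := by
      intro x hx
      have hx0 : x ≠ 0 := hx.2
      rw [phiDeriv_det hM hN hx0, abs_of_pos (pow_pos (cfun_pos hM hN hx0) d),
        qf_phi hM hN hx0]
      simp only [Pi.mul_apply]
      rw [hHdef]
      have hHx : ENNReal.ofReal ((qf d R⁻¹ (normalizeSphere d x)
          / qf d R₀⁻¹ (normalizeSphere d x)) ^ ((d : ℝ) / 2))
          = ENNReal.ofReal (cfun R⁻¹ R₀⁻¹ x ^ d) := by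
        rw [ratio_normalize hx0, cfun_pow_eq hM hN hx0]
      rw [mul_comm]
      congr 1
      exact hHx.symm
    calc acg d R₀ A
        = gaussianE d R₀ (normalizeSphere d ⁻¹' A) := by
          rw [acg, Measure.map_apply measurable_normalizeSphere hA]
      _ = ∫⁻ x in normalizeSphere d ⁻¹' A,
            ENNReal.ofReal (C * Real.exp (-(1/2) * qf d (R₀⁻¹) x)) ∂volume := by
          rw [hgauss R₀ hdet₀, withDensity_apply _ hpreA]
      _ = ∫⁻ x in s₀, ENNReal.ofReal (C * Real.exp (-(1/2) * qf d (R₀⁻¹) x)) ∂volume :=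
          setLIntegral_congr hsae
      _ = ∫⁻ x in phi R⁻¹ R₀⁻¹ '' s₀,
            ENNReal.ofReal (C * Real.exp (-(1/2) * qf d (R₀⁻¹) x)) ∂volume := by
          rw [hs₀def, phi_image hM hN A]
      _ = ∫⁻ x in s₀, ENNReal.ofReal |(phiDeriv R⁻¹ R₀⁻¹ x).det|
            * ENNReal.ofReal (C * Real.exp (-(1/2) * qf d (R₀⁻¹) (phi R⁻¹ R₀⁻¹ x))) ∂volume :=
          lintegral_image_eq_lintegral_abs_det_fderiv_mul volume hs₀ hder hinj _
      _ = ∫⁻ x in s₀, ((fun x => ENNReal.ofReal (C * Real.exp (-(1/2) * qf d R⁻¹ x)))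
            * fun x => H (normalizeSphere d x)) x ∂volume :=
          setLIntegral_congr_fun hs₀ hpoint
      _ = ∫⁻ x in normalizeSphere d ⁻¹' A,
            ((fun x => ENNReal.ofReal (C * Real.exp (-(1/2) * qf d R⁻¹ x)))
            * fun x => H (normalizeSphere d x)) x ∂volume :=
          (setLIntegral_congr hsae).symm
      _ = ∫⁻ x in normalizeSphere d ⁻¹' A, H (normalizeSphere d x) ∂(gaussianE d R) := by
          rw [hgauss R hdet]
          exact (setLIntegral_withDensity_eq_setLIntegral_mul volume (hdens R)
            (hHmeas.comp measurable_normalizeSphere) hpreA).symm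
      _ = ∫⁻ u in A, H u ∂(acg d R) := by
          rw [acg]
          exact (setLIntegral_map hA hHmeas measurable_normalizeSphere).symm
      _ = ((acg d R).withDensity H) A := (withDensity_apply H hA).symm
  -- Radon–Nikodym derivative
  have hac : acg d R₀ ≪ acg d R := by
    rw [key]
    exact withDensity_absolutelyContinuous _ H
  have hrn : (acg d R₀).rnDeriv (acg d R) =ᵐ[acg d R] H := by
    rw [key]
    exact Measure.rnDeriv_withDensity _ hHmeas
  have hrn₀ : (acg d R₀).rnDeriv (acg d R) =ᵐ[acg d R₀] H := hac.ae_le hrn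
  have hne : ∀ᵐ x ∂(acg d R₀), x ≠ (0 : EuclideanSpace ℝ (Fin d)) := by
    rw [MeasureTheory.ae_iff]
    have hset : {x : EuclideanSpace ℝ (Fin d) | ¬ x ≠ 0}
        = ({0} : Set (EuclideanSpace ℝ (Fin d))) := by
      ext x; simp
    rw [hset, acg, Measure.map_apply measurable_normalizeSphere (measurableSet_singleton 0)]
    have hpre : normalizeSphere d ⁻¹' ({0} : Set (EuclideanSpace ℝ (Fin d)))
        = ({0} : Set (EuclideanSpace ℝ (Fin d))) := by
      ext x
      simp [normalizeSphere_eq_zero_iff]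
    rw [hpre, hgauss R₀ hdet₀]
    exact (withDensity_absolutelyContinuous volume _) (measure_singleton 0)
  have hlog : ∀ᵐ x ∂(acg d R₀),
      Real.log ((acg d R₀).rnDeriv (acg d R) x).toReal
        = (d / 2 : ℝ) * Real.log (qf d R⁻¹ x / qf d R₀⁻¹ x) := by
    filter_upwards [hrn₀, hne] with x h1 h2
    have hrpos : 0 < qf d R⁻¹ x / qf d R₀⁻¹ x := div_pos (qf_pos hM h2) (qf_pos hN h2)
    rw [h1, hHdef]
    rw [ENNReal.toReal_ofReal (Real.rpow_nonneg (le_of_lt hrpos) _)]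
    rw [Real.log_rpow hrpos]
  calc klDiv (acg d R₀) (acg d R)
      = ∫ x, Real.log ((acg d R₀).rnDeriv (acg d R) x).toReal ∂(acg d R₀) := rfl
    _ = ∫ x, (d / 2 : ℝ) * Real.log (qf d R⁻¹ x / qf d R₀⁻¹ x) ∂(acg d R₀) :=
        integral_congr_ae hlog
    _ = (d / 2 : ℝ) * ∫ x, Real.log (qf d R⁻¹ x / qf d R₀⁻¹ x) ∂(acg d R₀) :=
        integral_const_mul _ _
    _ = (d / 2 : ℝ) * ∫ x, Real.log (((fun i => x i) ⬝ᵥ R⁻¹.mulVec fun i => x i) /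
          ((fun i => x i) ⬝ᵥ R₀⁻¹.mulVec fun i => x i)) ∂ acg d R₀ := rfl
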